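/- arXiv:2104.05380 — 2 statements merged into one kernel-verified Lean document; each statement's English description precedes it below -/
import Mathlib

section
/- Let f ∈ L^1_loc(X) and 0 < s ≤ 1/2. Then for μ-a.e. x ∈ X, the maximal s-median over balls converges to f: lim_{r→0} m_f^s(B(x,r)) = f(x). -/
open MeasureTheory Metric Set ENNReal Filter Topology

/-- The maximal `s`-median of `f` over `A`. -/
noncomputable def maxMedian {X : Type*} [MeasurableSpace X] (μ : Measure X) (s : ℝ)
    (f : X → ℝ) (A : Set X) : ℝ :=
  sInf {a : ℝ | μ {x ∈ A | a < f x} < ENNReal.ofReal s * μ A}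

section Aux

variable {X : Type*} [MetricSpace X] [MeasurableSpace X] [BorelSpace X]

/-- Iterated doubling estimate for balls. -/
lemma meas_ball_pow_le (μ : Measure X) (C : ℝ≥0∞)
    (hdoub : ∀ (x : X) (r : ℝ), μ (ball x (2 * r)) ≤ C * μ (ball x r))
    (x : X) (k : ℕ) : ∀ r : ℝ, μ (ball x (2 ^ k * r)) ≤ C ^ k * μ (ball x r) := by
  induction k with
  | zero => simp
  | succ k ih =>
      intro r
      have h1 : (2 : ℝ) ^ (k + 1) * r = 2 ^ k * (2 * r) := by ring
      calc μ (ball x (2 ^ (k + 1) * r)) = μ (ball x (2 ^ k * (2 * r))) := by rw [h1]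
        _ ≤ C ^ k * μ (ball x (2 * r)) := ih (2 * r)
        _ ≤ C ^ k * (C * μ (ball x r)) := by gcongr; exact hdoub x r
        _ = C ^ (k + 1) * μ (ball x r) := by rw [← mul_assoc, pow_succ]

/-- An `ε`-separated subset of a ball is finite, in a doubling metric measure space. -/
lemma sep_finite (μ : Measure X) (C : ℝ≥0∞) (hC : C ≠ ⊤)
    (hdoub : ∀ (x : X) (r : ℝ), μ (ball x (2 * r)) ≤ C * μ (ball x r))
    (hpos : ∀ (x : X) (r : ℝ), 0 < r → 0 < μ (ball x r))
    (hfin : ∀ (x : X) (r : ℝ), μ (ball x r) < ⊤)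
    (x₀ : X) (R ε : ℝ) (hε : 0 < ε) (t : Set X) (htb : t ⊆ ball x₀ R)
    (hsep : t.Pairwise fun p q => ε ≤ dist p q) : t.Finite := by
  rcases le_or_gt R 0 with hR | hR
  · have : ball x₀ R = ∅ := ball_eq_empty.2 hR
    rw [this, subset_empty_iff] at htb
    simp [htb]
  -- C ≠ 0
  have hC0 : C ≠ 0 := by
    intro h
    have h1 : 0 < μ (ball x₀ (2 * R)) := hpos x₀ _ (by linarith)
    have h2 := hdoub x₀ R
    rw [h] at h2
    simp at h2
    rw [h2] at h1
    exact lt_irrefl _ h1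
  obtain ⟨k, hk⟩ := pow_unbounded_of_one_lt (2 * R / (ε / 2)) (one_lt_two (α := ℝ))
  have hk' : 2 * R < 2 ^ k * (ε / 2) := by
    rw [div_lt_iff₀ (by linarith)] at hk
    linarith [hk]
  set c : ℝ≥0∞ := μ (ball x₀ R) / C ^ k with hc
  have hc0 : c ≠ 0 := by
    apply ne_of_gt
    exact ENNReal.div_pos (ne_of_gt (hpos x₀ R hR)) (pow_ne_top hC)
  have hct : c ≠ ⊤ := by
    apply ne_of_lt
    exact ENNReal.div_lt_top (ne_of_lt (hfin x₀ R)) (pow_ne_zero k hC0)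
  -- lower bound on small balls
  have hlow : ∀ p ∈ t, c ≤ μ (ball p (ε / 2)) := by
    intro p hp
    have hsub : ball x₀ R ⊆ ball p (2 ^ k * (ε / 2)) := by
      intro y hy
      have h1 : dist y p ≤ dist y x₀ + dist x₀ p := dist_triangle y x₀ p
      have h2 : dist y x₀ < R := mem_ball.1 hy
      have h3 : dist x₀ p < R := by rw [dist_comm]; exact mem_ball.1 (htb hp)
      exact mem_ball.2 (by linarith)
    have h4 : μ (ball x₀ R) ≤ C ^ k * μ (ball p (ε / 2)) :=
      (measure_mono hsub).trans (meas_ball_pow_le μ C hdoub p k (ε / 2))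
    rw [hc, ENNReal.div_le_iff (pow_ne_zero k hC0) (pow_ne_top hC)]
    rwa [mul_comm]
  set M : ℝ≥0∞ := μ (ball x₀ (R + ε)) with hM
  have hMt : M ≠ ⊤ := ne_of_lt (hfin x₀ (R + ε))
  by_contra hinf
  replace hinf : t.Infinite := hinf
  obtain ⟨u, hut, hcard⟩ := hinf.exists_subset_card_eq (⌈(M / c).toReal⌉₊ + 1)
  have hdisj : (↑u : Set X).PairwiseDisjoint fun p => ball p (ε / 2) := by
    intro p hp q hq hpq
    apply ball_disjoint_ball
    rw [dist_comm] at *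
    calc ε / 2 + ε / 2 = ε := by ring
      _ ≤ dist q p := hsep (hut hq) (hut hp) (Ne.symm hpq)
  have hsum : μ (⋃ p ∈ u, ball p (ε / 2)) = ∑ p ∈ u, μ (ball p (ε / 2)) :=
    measure_biUnion_finset hdisj fun p _ => measurableSet_ball
  have hsub2 : (⋃ p ∈ u, ball p (ε / 2)) ⊆ ball x₀ (R + ε) := by
    intro y hy
    simp only [mem_iUnion] at hy
    obtain ⟨p, hp, hyp⟩ := hy
    have h1 : dist y x₀ ≤ dist y p + dist p x₀ := dist_triangle y p x₀
    have h2 : dist y p < ε / 2 := mem_ball.1 hyp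
    have h3 : dist p x₀ < R := mem_ball.1 (htb (hut hp))
    exact mem_ball.2 (by linarith)
  have hle : (↑u.card : ℝ≥0∞) * c ≤ M := by
    calc (↑u.card : ℝ≥0∞) * c = ∑ _p ∈ u, c := by
          rw [Finset.sum_const, nsmul_eq_mul]
      _ ≤ ∑ p ∈ u, μ (ball p (ε / 2)) := Finset.sum_le_sum fun p hp => hlow p (hut hp)
      _ = μ (⋃ p ∈ u, ball p (ε / 2)) := hsum.symm
      _ ≤ M := measure_mono hsub2
  have hle2 : (↑u.card : ℝ≥0∞) ≤ M / c :=
    (ENNReal.le_div_iff_mul_le (Or.inl hc0) (Or.inl hct)).2 hle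
  have hfin2 : M / c ≠ ⊤ := ne_of_lt (ENNReal.div_lt_top hMt hc0)
  have h5 : (u.card : ℝ) ≤ (M / c).toReal := by
    have := ENNReal.toReal_mono hfin2 hle2
    rwa [ENNReal.toReal_natCast] at this
  have h6 : u.card ≤ ⌈(M / c).toReal⌉₊ := by
    calc u.card = ⌈(u.card : ℝ)⌉₊ := (Nat.ceil_natCast _).symm
      _ ≤ ⌈(M / c).toReal⌉₊ := Nat.ceil_mono h5
  omega

/-- A doubling metric measure space (with positive, finite balls) is second countable. -/
lemma secondCountable_of_doubling [Nonempty X] (μ : Measure X) (C : ℝ≥0∞) (hC : C ≠ ⊤)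
    (hdoub : ∀ (x : X) (r : ℝ), μ (ball x (2 * r)) ≤ C * μ (ball x r))
    (hpos : ∀ (x : X) (r : ℝ), 0 < r → 0 < μ (ball x r))
    (hfin : ∀ (x : X) (r : ℝ), μ (ball x r) < ⊤) :
    SecondCountableTopology X := by
  apply Metric.secondCountable_of_almost_dense_set
  intro ε hε
  obtain ⟨x₀⟩ := ‹Nonempty X›
  set 𝒮 : Set (Set X) := {t | t.Pairwise fun p q => ε ≤ dist p q} with h𝒮
  obtain ⟨S, hS⟩ := zorn_subset 𝒮 (by
    intro c hc hchain
    refine ⟨⋃₀ c, ?_, fun s hs => subset_sUnion_of_mem hs⟩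
    rw [h𝒮, mem_setOf_eq, Set.pairwise_sUnion hchain.directedOn]
    exact fun a ha => hc ha)
  have hScnt : S.Countable := by
    have hsub : S ⊆ ⋃ n : ℕ, S ∩ ball x₀ n := by
      intro p hp
      obtain ⟨n, hn⟩ := exists_nat_gt (dist p x₀)
      exact mem_iUnion.2 ⟨n, hp, mem_ball.2 hn⟩
    refine Countable.mono hsub (countable_iUnion fun n => Set.Finite.countable ?_)
    exact sep_finite μ C hC hdoub hpos hfin x₀ n ε hε _ inter_subset_right
      (hS.prop.mono inter_subset_left)
  refine ⟨S, hScnt, fun x => ?_⟩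
  by_contra h
  push_neg at h
  have hxS : x ∉ S := by
    intro hx
    have h1 := h x hx
    rw [dist_self] at h1
    linarith
  have : insert x S ∈ 𝒮 := by
    rw [h𝒮, mem_setOf_eq]
    intro p hp q hq hpq
    rcases hp with rfl | hp
    · rcases hq with rfl | hq
      · exact absurd rfl hpq
      · exact le_of_lt (h q hq)
    · rcases hq with rfl | hq
      · rw [dist_comm]; exact le_of_lt (h p hp)
      · exact hS.prop hp hq hpq
  have := hS.2 this (subset_insert x S) (mem_insert x S)
  exact hxS this

/-- Median estimate from a Chebyshev-type bound. -/
lemma abs_maxMedian_sub_le (μ : Measure X) (s ε : ℝ) (hs : 0 < s) (hs' : s ≤ 1 / 2)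
    (hε : 0 < ε) (f : X → ℝ) (x : X) (A : Set X) (hA0 : μ A ≠ 0) (hAt : μ A ≠ ⊤)
    (hbad : μ {y ∈ A | ε < |f y - f x|} < ENNReal.ofReal s * μ A) :
    |maxMedian μ s f A - f x| ≤ ε := by
  set T : Set ℝ := {a : ℝ | μ {y ∈ A | a < f y} < ENNReal.ofReal s * μ A} with hT
  have hmem : f x + ε ∈ T := by
    rw [hT, mem_setOf_eq]
    refine lt_of_le_of_lt (measure_mono ?_) hbad
    rintro y ⟨hyA, hy⟩
    exact ⟨hyA, lt_of_lt_of_le (by linarith) (le_abs_self _)⟩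
  have hlb : ∀ a ∈ T, f x - ε ≤ a := by
    intro a ha
    by_contra hcon
    push_neg at hcon
    have hcover : A ⊆ {y ∈ A | a < f y} ∪ {y ∈ A | ε < |f y - f x|} := by
      intro y hy
      by_cases hcase : ε < |f y - f x|
      · exact Or.inr ⟨hy, hcase⟩
      · refine Or.inl ⟨hy, ?_⟩
        have := abs_le.1 (not_lt.1 hcase)
        linarith [this.1]
    have h1 : μ A ≤ μ {y ∈ A | a < f y} + μ {y ∈ A | ε < |f y - f x|} :=
      (measure_mono hcover).trans (measure_union_le _ _)
    have h2 : μ {y ∈ A | a < f y} + μ {y ∈ A | ε < |f y - f x|}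
        < ENNReal.ofReal s * μ A + ENNReal.ofReal s * μ A :=
      ENNReal.add_lt_add ha hbad
    have h3 : ENNReal.ofReal s * μ A + ENNReal.ofReal s * μ A ≤ μ A := by
      rw [← two_mul, ← mul_assoc]
      have : (2 : ℝ≥0∞) * ENNReal.ofReal s = ENNReal.ofReal (2 * s) := by
        rw [ENNReal.ofReal_mul (by norm_num)]
        norm_num
      rw [this]
      calc ENNReal.ofReal (2 * s) * μ A ≤ 1 * μ A := by
            gcongr
            rw [show (1 : ℝ≥0∞) = ENNReal.ofReal 1 by simp]
            exact ENNReal.ofReal_le_ofReal (by linarith)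
        _ = μ A := one_mul _
    exact lt_irrefl _ (lt_of_le_of_lt h1 (lt_of_lt_of_le h2 h3))
  have h1 : maxMedian μ s f A ≤ f x + ε := csInf_le ⟨f x - ε, hlb⟩ hmem
  have h2 : f x - ε ≤ maxMedian μ s f A := le_csInf ⟨_, hmem⟩ hlb
  rw [abs_le]
  constructor <;> linarith

end Aux

/-- Lebesgue differentiation theorem for medians: for `f ∈ L¹_loc` and `0 < s ≤ 1/2`,
`m_f^s(B(x,r)) → f(x)` as `r → 0⁺` for μ-a.e. `x`. -/
theorem maxMedian_tendsto_ae {X : Type*} [MetricSpace X] [MeasurableSpace X] [BorelSpace X]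
    (μ : Measure X) [IsLocallyFiniteMeasure μ] (C : ℝ≥0∞) (hC : C ≠ ⊤)
    (hdoub : ∀ (x : X) (r : ℝ), μ (ball x (2 * r)) ≤ C * μ (ball x r))
    (hpos : ∀ (x : X) (r : ℝ), 0 < r → 0 < μ (ball x r))
    (hfin : ∀ (x : X) (r : ℝ), μ (ball x r) < ⊤)
    (f : X → ℝ) (hf : LocallyIntegrable f μ) (s : ℝ) (hs : 0 < s) (hs' : s ≤ 1 / 2) :
    ∀ᵐ x ∂μ, Tendsto (fun r => maxMedian μ s f (ball x r)) (𝓝[>] 0) (𝓝 (f x)) := by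
  rcases isEmpty_or_nonempty X with hX | hX
  · exact Filter.Eventually.of_forall fun x => isEmptyElim x
  -- Upgrade the constant
  set D : NNReal := C.toNNReal + 1 with hD
  have hCD : C ≤ (D : ℝ≥0∞) := by
    rw [hD, ENNReal.coe_add, ENNReal.coe_toNNReal hC]
    exact le_add_of_nonneg_right zero_le
  have hdoubD : ∀ (x : X) (r : ℝ), μ (ball x (2 * r)) ≤ (D : ℝ≥0∞) * μ (ball x r) :=
    fun x r => (hdoub x r).trans (mul_le_mul_left hCD _)
  have hD1 : (1 : NNReal) ≤ D := le_add_of_nonneg_left zero_le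
  have hDt : (D : ℝ≥0∞) ≠ ⊤ := ENNReal.coe_ne_top
  have hD0 : (0 : ℝ) < ((D : ℝ≥0∞)).toReal := by
    rw [ENNReal.coe_toReal]
    exact_mod_cast lt_of_lt_of_le one_pos hD1
  haveI : SecondCountableTopology X := secondCountable_of_doubling μ D hDt hdoubD hpos hfin
  haveI : IsUnifLocDoublingMeasure μ := by
    refine ⟨⟨D * D, ?_⟩⟩
    filter_upwards [self_mem_nhdsWithin] with ε (hε : (0:ℝ) < ε)
    intro x
    calc μ (closedBall x (2 * ε)) ≤ μ (ball x (2 * (2 * ε))) := by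
          apply measure_mono
          apply closedBall_subset_ball
          linarith
      _ ≤ (D : ℝ≥0∞) * μ (ball x (2 * ε)) := hdoubD x (2 * ε)
      _ ≤ (D : ℝ≥0∞) * ((D : ℝ≥0∞) * μ (ball x ε)) := by gcongr; exact hdoubD x ε
      _ ≤ ↑(D * D) * μ (closedBall x ε) := by
          rw [ENNReal.coe_mul, mul_assoc]
          exact mul_le_mul_right (mul_le_mul_right (measure_mono ball_subset_closedBall) _) _
  -- Lebesgue differentiation
  filter_upwards [IsUnifLocDoublingMeasure.ae_tendsto_average_norm_sub μ hf 1] with x hx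
  -- specialize to centered balls
  have hav : Tendsto (fun r : ℝ => ⨍ y in closedBall x r, ‖f y - f x‖ ∂μ) (𝓝[>] 0) (𝓝 0) := by
    refine hx (fun _ => x) id tendsto_id ?_
    filter_upwards [self_mem_nhdsWithin] with r (hr : (0:ℝ) < r)
    exact mem_closedBall_self (by simp only [id]; linarith)
  -- local integrability near x
  obtain ⟨U, hU, hUi⟩ := hf x
  obtain ⟨r₀, hr₀, hr₀U⟩ := Metric.mem_nhds_iff.1 hU
  rw [Metric.tendsto_nhds]
  intro ε hε
  set ε' : ℝ := ε / 2 with hε'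
  have hε'0 : 0 < ε' := by positivity
  set κ : ℝ := s * ε' / (2 * (D : ℝ≥0∞).toReal) with hκ
  have hκ0 : 0 < κ := by
    apply div_pos (by positivity) (by positivity)
  have hev1 : ∀ᶠ r in 𝓝[>] (0:ℝ),
      ⨍ y in closedBall x r, ‖f y - f x‖ ∂μ < κ := hav.eventually (gt_mem_nhds hκ0)
  have hev2 : ∀ᶠ r in 𝓝[>] (0:ℝ), r < r₀ :=
    eventually_nhdsWithin_of_eventually_nhds (eventually_lt_nhds hr₀)
  filter_upwards [hev1, hev2, self_mem_nhdsWithin] with r havr hrr₀ (hr : (0:ℝ) < r)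
  -- Key measure estimate
  have hball0 : μ (ball x r) ≠ 0 := ne_of_gt (hpos x r hr)
  have hballt : μ (ball x r) ≠ ⊤ := ne_of_lt (hfin x r)
  have hcBsub : closedBall x r ⊆ ball x (2 * r) := closedBall_subset_ball (by linarith)
  have hcB0 : μ (closedBall x r) ≠ 0 :=
    fun h => hball0 (le_antisymm (le_trans (measure_mono ball_subset_closedBall) h.le) zero_le)
  have hcBt : μ (closedBall x r) ≠ ⊤ :=
    ne_of_lt (lt_of_le_of_lt (measure_mono hcBsub) (hfin x (2 * r)))
  have hInt : IntegrableOn (fun y => ‖f y - f x‖) (closedBall x r) μ := by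
    have h1 : IntegrableOn f (closedBall x r) μ :=
      hUi.mono_set ((closedBall_subset_ball hrr₀).trans hr₀U)
    exact (h1.sub (integrableOn_const (ne_of_lt (lt_of_le_of_lt (measure_mono hcBsub)
      (hfin x (2 * r)))))).norm
  have hnn : 0 ≤ᵐ[μ.restrict (closedBall x r)] fun y => ‖f y - f x‖ :=
    Filter.Eventually.of_forall fun y => norm_nonneg _
  -- bound the lintegral
  have hlint : ∫⁻ y in closedBall x r, ENNReal.ofReal ‖f y - f x‖ ∂μ
      ≤ ENNReal.ofReal κ * μ (closedBall x r) := by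
    rw [← ofReal_integral_eq_lintegral_ofReal hInt hnn]
    have hint_eq : ∫ y in closedBall x r, ‖f y - f x‖ ∂μ
        = (μ (closedBall x r)).toReal * ⨍ y in closedBall x r, ‖f y - f x‖ ∂μ := by
      rw [setAverage_eq, smul_eq_mul, measureReal_def, ← mul_assoc,
        mul_inv_cancel₀ (ENNReal.toReal_ne_zero.2 ⟨hcB0, hcBt⟩), one_mul]
    rw [hint_eq, ENNReal.ofReal_mul ENNReal.toReal_nonneg, ENNReal.ofReal_toReal hcBt, mul_comm]
    exact mul_le_mul_left (ENNReal.ofReal_le_ofReal havr.le) _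
  -- Chebyshev
  have hsetsub : {y ∈ ball x r | ε' < |f y - f x|}
      ⊆ {y | ENNReal.ofReal ε' ≤ ENNReal.ofReal ‖f y - f x‖} ∩ ball x r := by
    rintro y ⟨hyA, hy⟩
    exact ⟨ENNReal.ofReal_le_ofReal (by rw [Real.norm_eq_abs]; exact hy.le), hyA⟩
  have hmeas : AEMeasurable (fun y => ENNReal.ofReal ‖f y - f x‖) (μ.restrict (ball x r)) := by
    have h1 : AEStronglyMeasurable f (μ.restrict (ball x r)) :=
      hf.aestronglyMeasurable.restrict
    exact ((h1.sub aestronglyMeasurable_const).norm.aemeasurable).ennreal_ofReal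
  have hcheb : ENNReal.ofReal ε' * μ {y ∈ ball x r | ε' < |f y - f x|}
      ≤ ∫⁻ y in ball x r, ENNReal.ofReal ‖f y - f x‖ ∂μ := by
    calc ENNReal.ofReal ε' * μ {y ∈ ball x r | ε' < |f y - f x|}
        ≤ ENNReal.ofReal ε' *
          (μ.restrict (ball x r)) {y | ENNReal.ofReal ε' ≤ ENNReal.ofReal ‖f y - f x‖} := by
          refine mul_le_mul_right ?_ _
          rw [Measure.restrict_apply' measurableSet_ball]
          exact measure_mono hsetsub
      _ ≤ ∫⁻ y in ball x r, ENNReal.ofReal ‖f y - f x‖ ∂μ :=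
          mul_meas_ge_le_lintegral₀ hmeas _
  have hlint2 : ∫⁻ y in ball x r, ENNReal.ofReal ‖f y - f x‖ ∂μ
      ≤ ∫⁻ y in closedBall x r, ENNReal.ofReal ‖f y - f x‖ ∂μ :=
    lintegral_mono' (Measure.restrict_mono ball_subset_closedBall le_rfl) le_rfl
  -- combine
  have hDR : ENNReal.ofReal κ * μ (closedBall x r)
      ≤ ENNReal.ofReal κ * ((D : ℝ≥0∞) * μ (ball x r)) := by
    gcongr
    exact (measure_mono hcBsub).trans (hdoubD x r)
  have hκD : ENNReal.ofReal κ * (D : ℝ≥0∞) = ENNReal.ofReal (s * ε' / 2) := by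
    have hDr : (D : ℝ≥0∞) = ENNReal.ofReal (D : ℝ≥0∞).toReal := (ENNReal.ofReal_toReal hDt).symm
    rw [hDr, ← ENNReal.ofReal_mul hκ0.le, hκ]
    congr 1
    field_simp
  have hkey : μ {y ∈ ball x r | ε' < |f y - f x|} ≤ ENNReal.ofReal (s / 2) * μ (ball x r) := by
    have h1 : ENNReal.ofReal ε' * μ {y ∈ ball x r | ε' < |f y - f x|}
        ≤ ENNReal.ofReal ε' * (ENNReal.ofReal (s / 2) * μ (ball x r)) := by
      calc ENNReal.ofReal ε' * μ {y ∈ ball x r | ε' < |f y - f x|}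
          ≤ ENNReal.ofReal κ * ((D : ℝ≥0∞) * μ (ball x r)) :=
            (hcheb.trans hlint2).trans (hlint.trans hDR)
        _ = ENNReal.ofReal (s * ε' / 2) * μ (ball x r) := by
            rw [← mul_assoc, hκD]
        _ = ENNReal.ofReal ε' * (ENNReal.ofReal (s / 2) * μ (ball x r)) := by
            rw [← mul_assoc, ← ENNReal.ofReal_mul hε'0.le]
            congr 2
            ring
    exact (ENNReal.mul_le_mul_iff_right (by simp [hε'0]) ENNReal.ofReal_ne_top).1 h1
  have hbad : μ {y ∈ ball x r | ε' < |f y - f x|} < ENNReal.ofReal s * μ (ball x r) := by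
    refine lt_of_le_of_lt hkey ?_
    rw [ENNReal.mul_lt_mul_iff_left hball0 hballt]
    exact ENNReal.ofReal_lt_ofReal_iff_of_nonneg (by linarith) |>.2 (by linarith)
  have := abs_maxMedian_sub_le μ s ε' hs hs' hε'0 f x (ball x r) hball0 hballt hbad
  rw [Real.dist_eq]
  calc |maxMedian μ s f (ball x r) - f x| ≤ ε' := this
    _ < ε := by rw [hε']; linarith
end

section
/- Taking absolute values does not increase the median-type John–Nirenberg norm: ‖|f|‖_{JN_{p,0,s}(Ω)} ≤ ‖f‖_{JN_{p,0,s}(Ω)}. -/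
open MeasureTheory Metric Set ENNReal Filter Topology

/-- The median oscillation `inf_c m_{|f-c|}^s(A)` (as an extended nonnegative real). -/
noncomputable def medOsc {X : Type*} [MeasurableSpace X] (μ : Measure X) (s : ℝ)
    (f : X → ℝ) (A : Set X) : ℝ≥0∞ :=
  ⨅ c : ℝ, ENNReal.ofReal (maxMedian μ s (fun x => |f x - c|) A)

/-- `‖f‖_{JN_{p,0,s}(Ω)}^p`: the supremum of `Σ_i μ(B_i) (inf_c m_{|f-c|}^s(B_i))^p`
over countable collections of pairwise disjoint balls contained in `Ω`. -/
noncomputable def JNmedP {X : Type*} [PseudoMetricSpace X] [MeasurableSpace X]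
    (μ : Measure X) (p s : ℝ) (Ω : Set X) (f : X → ℝ) : ℝ≥0∞ :=
  ⨆ (c : ℕ → X) (r : ℕ → ℝ) (_ : ∀ i, ball (c i) (r i) ⊆ Ω)
    (_ : Pairwise fun i j => Disjoint (ball (c i) (r i)) (ball (c j) (r j))),
    ∑' i, μ (ball (c i) (r i)) * medOsc μ s f (ball (c i) (r i)) ^ p

/-- The median-type John--Nirenberg norm `‖f‖_{JN_{p,0,s}(Ω)}`. -/
noncomputable def JNmedNorm {X : Type*} [PseudoMetricSpace X] [MeasurableSpace X]
    (μ : Measure X) (p s : ℝ) (Ω : Set X) (f : X → ℝ) : ℝ≥0∞ :=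
  JNmedP μ p s Ω f ^ (1 / p)


lemma mem_nonneg_of_nonneg {X : Type*} [MeasurableSpace X] (μ : Measure X) {s : ℝ}
    (hs : s ≤ 1) {g : X → ℝ} (hg : ∀ x, 0 ≤ g x) {A : Set X} {a : ℝ}
    (ha : μ {x ∈ A | a < g x} < ENNReal.ofReal s * μ A) : 0 ≤ a := by
  by_contra h
  push_neg at h
  have heq : {x ∈ A | a < g x} = A := by
    ext x
    simp only [mem_sep_iff, and_iff_left_iff_imp]
    exact fun _ => lt_of_lt_of_le h (hg x)
  rw [heq] at ha
  have hle : ENNReal.ofReal s * μ A ≤ μ A := by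
    calc ENNReal.ofReal s * μ A ≤ 1 * μ A := by
          gcongr
          exact ENNReal.ofReal_le_one.mpr hs
      _ = μ A := one_mul _
  exact absurd (lt_of_lt_of_le ha hle) (lt_irrefl _)

lemma medOsc_abs_le {X : Type*} [MeasurableSpace X] (μ : Measure X) {s : ℝ}
    (hs : s ≤ 1) (f : X → ℝ) (A : Set X) :
    medOsc μ s (fun x => |f x|) A ≤ medOsc μ s f A := by
  simp only [medOsc]
  refine le_iInf fun c => ?_
  by_cases hne :
      {a : ℝ | μ {x ∈ A | a < |f x - c|} < ENNReal.ofReal s * μ A}.Nonempty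
  · refine le_trans (iInf_le _ |c|) ?_
    apply ENNReal.ofReal_le_ofReal
    apply csInf_le_csInf
    · exact ⟨0, fun a ha => mem_nonneg_of_nonneg μ hs (fun x => abs_nonneg _) ha⟩
    · exact hne
    · intro a ha
      refine lt_of_le_of_lt (measure_mono ?_) ha
      intro x hx
      exact ⟨hx.1, lt_of_lt_of_le hx.2 (abs_abs_sub_abs_le_abs_sub _ _)⟩
  · have hempty :
        {a : ℝ | μ {x ∈ A | a < |abs (f x) - 0|} < ENNReal.ofReal s * μ A} = ∅ := by
      rw [eq_empty_iff_forall_notMem]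
      intro a ha
      simp only [mem_setOf_eq, sub_zero, abs_abs] at ha
      apply hne
      refine ⟨|c| + a, ?_⟩
      simp only [mem_setOf_eq]
      refine lt_of_le_of_lt (measure_mono ?_) ha
      intro x hx
      refine ⟨hx.1, ?_⟩
      have h1 : |f x - c| ≤ |f x| + |c| := abs_sub _ _
      have h2 := hx.2
      linarith
    calc (⨅ c' : ℝ, ENNReal.ofReal (maxMedian μ s (fun x => |abs (f x) - c'|) A))
        ≤ ENNReal.ofReal (maxMedian μ s (fun x => |abs (f x) - 0|) A) := iInf_le _ 0
      _ = 0 := by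
          rw [maxMedian, hempty, Real.sInf_empty, ENNReal.ofReal_zero]
      _ ≤ _ := zero_le

/-- `‖|f|‖_{JN_{p,0,s}(Ω)} ≤ ‖f‖_{JN_{p,0,s}(Ω)}`. -/
theorem JNmedNorm_abs_le {X : Type*} [PseudoMetricSpace X] [MeasurableSpace X]
    (μ : Measure X) (p s : ℝ) (Ω : Set X) (hΩ : IsOpen Ω)
    (hp : 1 < p) (hs : 0 < s) (hs' : s ≤ 1 / 2) (f : X → ℝ) :
    JNmedNorm μ p s Ω (fun x => |f x|) ≤ JNmedNorm μ p s Ω f := by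
  have hs1 : s ≤ 1 := hs'.trans (by norm_num)
  have hP : JNmedP μ p s Ω (fun x => |f x|) ≤ JNmedP μ p s Ω f := by
    refine iSup_le fun c => iSup_le fun r => iSup_le fun h1 => iSup_le fun h2 => ?_
    refine le_trans ?_
      (le_iSup_of_le c (le_iSup_of_le r (le_iSup_of_le h1 (le_iSup_of_le h2 le_rfl))))
    refine ENNReal.tsum_le_tsum fun i => ?_
    refine mul_le_mul_right (ENNReal.rpow_le_rpow ?_ (by linarith)) _
    exact medOsc_abs_le μ hs1 f _
  exact ENNReal.rpow_le_rpow hP (by positivity)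
end
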